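/- Work in the polynomial ring ℂ[z₁,z₂] with integers K > M ≥ 2 and N ≥ 3, F₁ = z₁^M, F₂ = z₂^N + z₂z₁^K. Define the sequence of polynomials G₀ = J(F₁,F₂) and G_{j+1} = J(F₁,G_j) for j ≥ 0. Then for every integer j with 1 ≤ j ≤ N−1, G_j = M^{j+1} · (N!/(N−1−j)!) · z₁^{(j+1)(M−1)} · z₂^{N−1−j}. In particular G_{N−1} = M^N · N! · z₁^{N(M−1)}, so z₁^{N(M−1)} belongs to the ideal generated by the iterated Jacobian determinants G₀, G₁, …, G_{N−1}; thus z₁ is obtained from this ideal by a root-taking of effective order N(M−1) < MN. -/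

import Mathlib

open MvPolynomial

/-- The Jacobian determinant `J(f,h) = (∂f/∂z₁)(∂h/∂z₂) − (∂f/∂z₂)(∂h/∂z₁)`
of two polynomials in `ℂ[z₁,z₂]`. -/
noncomputable def Jac (f h : MvPolynomial (Fin 2) ℂ) : MvPolynomial (Fin 2) ℂ :=
  pderiv 0 f * pderiv 1 h - pderiv 1 f * pderiv 0 h

/-- The iterated Jacobian determinants of the Catlin–D'Angelo example:
`G₀ = J(z₁^M, z₂^N + z₂ z₁^K)` and `G_{j+1} = J(z₁^M, G_j)`. -/
noncomputable def iterJac (M N K : ℕ) : ℕ → MvPolynomial (Fin 2) ℂ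
  | 0 => Jac (X 0 ^ M) (X 1 ^ N + X 1 * X 0 ^ K)
  | j + 1 => Jac (X 0 ^ M) (iterJac M N K j)

lemma pderiv1_X0pow (a : ℕ) : pderiv 1 (X 0 ^ a : MvPolynomial (Fin 2) ℂ) = 0 := by
  simp [pderiv_pow]

lemma Jac_X0pow (M : ℕ) (h : MvPolynomial (Fin 2) ℂ) :
    Jac (X 0 ^ M) h = C (M : ℂ) * X 0 ^ (M - 1) * pderiv 1 h := by
  simp [Jac, pderiv_pow, pderiv1_X0pow]

lemma pd1_mono (a b : ℕ) (c : ℂ) :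
    pderiv 1 (C c * X 0 ^ a * X 1 ^ b : MvPolynomial (Fin 2) ℂ) =
      C (b * c) * X 0 ^ a * X 1 ^ (b - 1) := by
  simp [pderiv_mul, pderiv_pow, pderiv1_X0pow, pderiv_C]
  ring

lemma key (M N K : ℕ) (hM : 2 ≤ M) (hN : 3 ≤ N) :
    ∀ j : ℕ, 1 ≤ j → j ≤ N - 1 →
      iterJac M N K j =
        C ((M ^ (j + 1) * N.descFactorial (j + 1) : ℕ) : ℂ) *
          X 0 ^ ((j + 1) * (M - 1)) * X 1 ^ (N - 1 - j) := by
  have h0 : iterJac M N K 0 =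
      C (M : ℂ) * X 0 ^ (M - 1) * (C (N : ℂ) * X 1 ^ (N - 1) + X 0 ^ K) := by
    show Jac _ _ = _
    rw [Jac_X0pow]
    simp [pderiv_mul, pderiv_pow, pderiv1_X0pow]
  intro j
  induction j with
  | zero => omega
  | succ j ih =>
    intro _ hle
    by_cases hj : 1 ≤ j
    · have heq := ih hj (by omega)
      show Jac _ _ = _
      rw [Jac_X0pow, heq, pd1_mono]
      rw [show (j+1+1)*(M-1) = (M-1) + (j+1)*(M-1) from by ring, pow_add,
        show M ^ (j + 1 + 1) * N.descFactorial (j + 1 + 1)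
            = M * ((N - 1 - j) * (M ^ (j + 1) * N.descFactorial (j + 1))) from by
          rw [Nat.descFactorial_succ, show N - (j+1) = N - 1 - j from by omega]; ring,
        show N - 1 - j - 1 = N - 1 - (j+1) from by omega]
      push_cast
      simp only [C_mul, C_pow]
      ring
    · have hj0 : j = 0 := by omega
      subst hj0
      show Jac _ _ = _
      rw [Jac_X0pow, h0]
      have hd : pderiv 1 (C (M:ℂ) * X 0 ^ (M - 1) * (C (N:ℂ) * X 1 ^ (N - 1) + X 0 ^ K)
          : MvPolynomial (Fin 2) ℂ) =
          C (M:ℂ) * X 0 ^ (M - 1) * (C (N:ℂ) * (C ((N-1 : ℕ):ℂ) * X 1 ^ (N - 1 - 1))) := by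
        rw [pderiv_mul, pderiv_mul]
        simp [pderiv_pow, pderiv1_X0pow, pderiv_C]
      rw [hd,
        show M ^ (0 + 1 + 1) * N.descFactorial (0 + 1 + 1) = M * (M * (N * (N - 1))) from by
          rw [Nat.descFactorial_succ, Nat.descFactorial_one]; ring,
        show (0+1+1)*(M-1) = (M-1) + (M-1) from by ring, pow_add,
        show N - 1 - 1 = N - 1 - (0 + 1) from by omega]
      push_cast
      simp only [C_mul, C_pow]
      ring

/-- **The effective Kohn algorithm for the Catlin–D'Angelo example (§4.3).**
With `G₀ = J(F₁,F₂)`, `G_{j+1} = J(F₁,G_j)`, one has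
`G_j = M^{j+1}·(N!/(N−1−j)!)·z₁^{(j+1)(M−1)}·z₂^{N−1−j}` for `1 ≤ j ≤ N−1`; in
particular `G_{N−1} = M^N·N!·z₁^{N(M−1)}`, so `z₁^{N(M−1)}` lies in the ideal
generated by `G₀,…,G_{N−1}`, and the root order `N(M−1)` is `< MN`. -/
theorem catlin_dangelo_effective_chain
    (M N K : ℕ) (hM : 2 ≤ M) (hN : 3 ≤ N) (hK : M < K) :
    (∀ j : ℕ, 1 ≤ j → j ≤ N - 1 →
        iterJac M N K j =
          ((M ^ (j + 1) * (Nat.factorial N / Nat.factorial (N - 1 - j)) : ℕ) :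
              MvPolynomial (Fin 2) ℂ) *
            X 0 ^ ((j + 1) * (M - 1)) * X 1 ^ (N - 1 - j)) ∧
      iterJac M N K (N - 1) =
        ((M ^ N * Nat.factorial N : ℕ) : MvPolynomial (Fin 2) ℂ) *
          X 0 ^ (N * (M - 1)) ∧
      X 0 ^ (N * (M - 1)) ∈
        Ideal.span (Set.range fun j : Fin N => iterJac M N K (j : ℕ)) ∧
      N * (M - 1) < M * N := by
  have main : ∀ j : ℕ, 1 ≤ j → j ≤ N - 1 →
      iterJac M N K j =
        ((M ^ (j + 1) * (Nat.factorial N / Nat.factorial (N - 1 - j)) : ℕ) :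
            MvPolynomial (Fin 2) ℂ) *
          X 0 ^ ((j + 1) * (M - 1)) * X 1 ^ (N - 1 - j) := by
    intro j h1 h2
    rw [show Nat.factorial N / Nat.factorial (N - 1 - j) = N.descFactorial (j + 1) from by
      rw [Nat.descFactorial_eq_div (by omega), show N - (j + 1) = N - 1 - j from by omega],
      ← map_natCast (C : ℂ →+* MvPolynomial (Fin 2) ℂ)]
    exact key M N K hM hN j h1 h2
  have h2 : iterJac M N K (N - 1) =
      ((M ^ N * Nat.factorial N : ℕ) : MvPolynomial (Fin 2) ℂ) * X 0 ^ (N * (M - 1)) := by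
    have := main (N - 1) (by omega) le_rfl
    rw [show N - 1 + 1 = N from by omega, show N - 1 - (N - 1) = 0 from by omega] at this
    simpa using this
  refine ⟨main, h2, ?_, ?_⟩
  · have hc : ((M ^ N * Nat.factorial N : ℕ) : ℂ) ≠ 0 := by
      have : 0 < M ^ N * Nat.factorial N :=
        Nat.mul_pos (Nat.pow_pos (by omega)) N.factorial_pos
      exact_mod_cast this.ne'
    have hx : X 0 ^ (N * (M - 1)) =
        C (((M ^ N * Nat.factorial N : ℕ) : ℂ))⁻¹ * iterJac M N K (N - 1) := by
      rw [h2, ← map_natCast (C : ℂ →+* MvPolynomial (Fin 2) ℂ), ← mul_assoc, ← C_mul,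
        inv_mul_cancel₀ hc, C_1, one_mul]
    rw [hx]
    exact Ideal.mul_mem_left _ _ (Ideal.subset_span ⟨⟨N - 1, by omega⟩, rfl⟩)
  · calc N * (M - 1) < N * M :=
        mul_lt_mul_of_pos_left (show M - 1 < M from by omega) (show 0 < N from by omega)
      _ = M * N := Nat.mul_comm N M
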